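/- Let E be a real Banach space, 𝓚 ⊆ E nonempty closed convex, and U ⊆ 𝓚 bounded and relatively open in 𝓚 with boundary ∂U in 𝓚. Let A be a linear operator with domain D(A) ⊆ E whose graph is closed, and let (J_h)_{0<h≤h*, hω<1} be a family of compact continuous linear operators on E such that for each admissible h: J_h x ∈ D(A) and J_h x − h•A(J_h x) = x for all x ∈ E, J_h(y − h•Ay) = y for all y ∈ D(A), J_h(𝓚) ⊆ 𝓚, and ‖J_h‖ ≤ M/(1 − hω), where M ≥ 1, ω ∈ ℝ. Let r : E → 𝓚 be a continuous retraction with ‖z − r(z)‖ ≤ 2 d(z, 𝓚) for all z ∈ E. Let α > 0, let G : 𝓚 → (subsets of E) map bounded sets onto bounded sets, and let g : 𝓚 → E be continuous, tangent to 𝓚 (g(x) ∈ T_𝓚(x) for all x), and an α-approximation of G: for every x ∈ 𝓚 there are x' ∈ 𝓚 with ‖x' − x‖ < α, y ∈ G(x') and ξ ∈ E with ‖ξ‖ < α such that g(x) = y + ξ. Assume that Ax + y + ξ ≠ 0 for all x ∈ D(A) ∩ ∂U, x' ∈ 𝓚 with ‖x' − x‖ < α, y ∈ G(x') and ξ with ‖ξ‖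 < α. Then there exists h₀ ∈ (0, h*] with h₀ω < 1 such that for every h ∈ (0, h₀] and every x ∈ ∂U, x ≠ r(J_h(x + h•g(x))). -/

import Mathlib

open Metric Set Filter Topology

set_option maxHeartbeats 1000000 in
/-- Let `𝓚 ⊆ E` be nonempty closed convex, `U ⊆ 𝓚` bounded relatively open
with relative boundary `∂U = (cl U ∩ 𝓚) \ U`, `A` a closed partially defined linear operator
with compact `𝓚`-invariant resolvents `J_h` satisfying `‖J_h‖ ≤ M/(1-hω)`, and let `r` be a
retraction onto `𝓚` with `‖z - r z‖ ≤ 2 d(z,𝓚)`.  If `g` is a continuous tangent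
`α`-approximation of `G` and `Ax + y + ξ ≠ 0` for all `x ∈ D(A) ∩ ∂U`, `x' ∈ 𝓚` with
`‖x' - x‖ < α`, `y ∈ G(x')`, `‖ξ‖ < α`, then there is `h₀ ∈ (0, h*]`, `h₀ω < 1`, such that
`x ≠ r(J_h(x + h g(x)))` for every `h ∈ (0, h₀]` and every `x ∈ ∂U`. -/
theorem no_fixed_points_of_approximating_field_on_boundary
    {E : Type*} [NormedAddCommGroup E] [NormedSpace ℝ E] [CompleteSpace E]
    (𝓚 : Set E) (hne : 𝓚.Nonempty) (hcl : IsClosed 𝓚) (hconv : Convex ℝ 𝓚)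
    (U : Set E) (hU𝓚 : U ⊆ 𝓚) (hUbdd : Bornology.IsBounded U)
    (hUopen : ∃ V : Set E, IsOpen V ∧ U = V ∩ 𝓚)
    -- the closed operator A and its compact resolvents J h
    (A : E →ₗ.[ℝ] E) (hAclosed : A.IsClosed)
    (M ω hstar : ℝ) (hM : 1 ≤ M) (hstar_pos : 0 < hstar)
    (J : ℝ → E →L[ℝ] E)
    (hJcomp : ∀ h : ℝ, 0 < h → h ≤ hstar → h * ω < 1 → IsCompactOperator (J h))
    (hJ1 : ∀ h : ℝ, 0 < h → h ≤ hstar → h * ω < 1 →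
      ∀ x : E, ∃ hx : J h x ∈ A.domain, J h x - h • A ⟨J h x, hx⟩ = x)
    (hJ2 : ∀ h : ℝ, 0 < h → h ≤ hstar → h * ω < 1 →
      ∀ y : A.domain, J h ((y : E) - h • A y) = (y : E))
    (hJinv : ∀ h : ℝ, 0 < h → h ≤ hstar → h * ω < 1 → ∀ x ∈ 𝓚, J h x ∈ 𝓚)
    (hJnorm : ∀ h : ℝ, 0 < h → h ≤ hstar → h * ω < 1 → ‖J h‖ ≤ M / (1 - h * ω))
    -- the retraction r onto 𝓚
    (r : E → E) (hrcont : Continuous r) (hrmem : ∀ z, r z ∈ 𝓚)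
    (hrfix : ∀ z ∈ 𝓚, r z = z)
    (hrdist : ∀ z : E, ‖z - r z‖ ≤ 2 * Metric.infDist z 𝓚)
    -- the set-valued map G and its tangent α-approximation g
    (α : ℝ) (hα : 0 < α) (G : E → Set E)
    (hGbdd : ∀ B : Set E, B ⊆ 𝓚 → Bornology.IsBounded B →
      Bornology.IsBounded (⋃ x ∈ B, G x))
    (g : E → E) (hgcont : ContinuousOn g 𝓚)
    (hgtan : ∀ x ∈ 𝓚,
      g x ∈ closure (⋃ h ∈ Set.Ioi (0:ℝ), (fun k => h⁻¹ • (k - x)) '' 𝓚))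
    (hgapprox : ∀ x ∈ 𝓚, ∃ x' ∈ 𝓚, ‖x' - x‖ < α ∧
      ∃ y ∈ G x', ∃ ξ : E, ‖ξ‖ < α ∧ g x = y + ξ)
    -- nondegeneracy near the relative boundary of U in 𝓚
    (hne0 : ∀ x, ∀ hx : x ∈ A.domain, x ∈ (closure U ∩ 𝓚) \ U →
      ∀ x' ∈ 𝓚, ‖x' - x‖ < α → ∀ y ∈ G x', ∀ ξ : E, ‖ξ‖ < α →
        A ⟨x, hx⟩ + y + ξ ≠ 0) :
    ∃ h₀ : ℝ, 0 < h₀ ∧ h₀ ≤ hstar ∧ h₀ * ω < 1 ∧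
      ∀ h : ℝ, 0 < h → h ≤ h₀ → ∀ x ∈ (closure U ∩ 𝓚) \ U,
        x ≠ r (J h (x + h • g x)) := by
  
  by_contra hcon
  push_neg at hcon
  obtain ⟨V, hVopen, hUV⟩ := hUopen
  set S : Set E := (closure U ∩ 𝓚) \ U with hSdef
  have hSK : S ⊆ 𝓚 := fun x hx => hx.1.2
  have hScl : IsClosed S := by
    have hSeq : S = (closure U ∩ 𝓚) ∩ Vᶜ := by
      ext x
      simp only [hSdef, mem_diff, mem_inter_iff, mem_compl_iff, hUV]
      tauto
    rw [hSeq]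
    exact (isClosed_closure.inter hcl).inter hVopen.isClosed_compl
  have hSbdd : Bornology.IsBounded S :=
    hUbdd.closure.subset (fun x hx => hx.1.1)
  -- the uniform parameter τ
  set ωp : ℝ := max ω 1 with hωpdef
  have hωppos : (0:ℝ) < ωp := lt_of_lt_of_le one_pos (le_max_right _ _)
  have hωle : ω ≤ ωp := le_max_left _ _
  set τ : ℝ := min hstar (1 / (2 * ωp)) with hτdef
  have hτpos : 0 < τ := lt_min hstar_pos (by positivity)
  have hτstar : τ ≤ hstar := min_le_left _ _
  have key : ∀ h : ℝ, 0 < h → h ≤ τ → h * ω ≤ 1 / 2 := by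
    intro h hh hhτ
    have h2 : h ≤ 1 / (2 * ωp) := hhτ.trans (min_le_right _ _)
    have h3 : ωp * (1 / (2 * ωp)) = 1 / 2 := by
      rw [mul_one_div, div_eq_div_iff (by positivity) (by norm_num : (2:ℝ) ≠ 0)]
      ring
    rcases le_or_gt ω 0 with hω | hω
    · nlinarith [mul_nonneg hh.le (neg_nonneg.2 hω)]
    · nlinarith [mul_le_mul_of_nonneg_left hωle hh.le,
        mul_le_mul_of_nonneg_right h2 hωppos.le]
  have hh' : ∀ h : ℝ, 0 < h → h ≤ τ → h ≤ hstar ∧ h * ω < 1 := fun h hh hhτ =>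
    ⟨hhτ.trans hτstar, (key h hh hhτ).trans_lt (by norm_num)⟩
  have hJnorm2 : ∀ h : ℝ, 0 < h → h ≤ τ → ∀ v : E, ‖J h v‖ ≤ 2 * M * ‖v‖ := by
    intro h hh hhτ v
    obtain ⟨hhs, hhω⟩ := hh' h hh hhτ
    have h1 := (J h).le_opNorm v
    have h2 := hJnorm h hh hhs hhω
    have h3 : M / (1 - h * ω) ≤ 2 * M := by
      rw [div_le_iff₀ (by nlinarith [key h hh hhτ])]
      nlinarith [key h hh hhτ]
    nlinarith [norm_nonneg v, mul_le_mul_of_nonneg_right (h2.trans h3) (norm_nonneg v)]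
  -- choose the bad sequence
  have hdivle : ∀ n : ℕ, τ / (n + 1) ≤ τ := by
    intro n
    rw [div_le_iff₀ (by positivity)]
    nlinarith [Nat.cast_nonneg (α := ℝ) n, hτpos]
  have hex : ∀ n : ℕ, ∃ h : ℝ, (0 < h ∧ h ≤ τ) ∧
      ∃ x, x ∈ S ∧ x = r (J h (x + h • g x)) := by
    intro n
    have hpos : 0 < τ / (n + 1) := by positivity
    obtain ⟨hle1, hle2⟩ := hh' _ hpos (hdivle n)
    obtain ⟨h, hh1, hh2, x, hx1, hx2⟩ := hcon (τ / (n + 1)) hpos hle1 hle2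
    exact ⟨h, ⟨hh1, hh2.trans (hdivle n)⟩, x, hx1, hx2⟩
  choose hn hnle xs hxS hfix using hex
  have hpos : ∀ n, 0 < hn n := fun n => (hnle n).1
  have hleτ : ∀ n, hn n ≤ τ := fun n => (hnle n).2
  clear hfix hxS hpos hleτ hnle hn xs
  have hex : ∀ n : ℕ, ∃ h : ℝ, (0 < h ∧ h ≤ τ / (n + 1)) ∧
      ∃ x, x ∈ S ∧ x = r (J h (x + h • g x)) := by
    intro n
    have hpos : 0 < τ / (n + 1) := by positivity
    obtain ⟨hle1, hle2⟩ := hh' _ hpos (hdivle n)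
    obtain ⟨h, hh1, hh2, x, hx1, hx2⟩ := hcon (τ / (n + 1)) hpos hle1 hle2
    exact ⟨h, ⟨hh1, hh2⟩, x, hx1, hx2⟩
  choose hn hnle xs hxS hfix using hex
  have hpos : ∀ n, 0 < hn n := fun n => (hnle n).1
  have hleτ : ∀ n, hn n ≤ τ := fun n => (hnle n).2.trans (hdivle n)
  have hnK : ∀ n, xs n ∈ 𝓚 := fun n => hSK (hxS n)
  have hn0 : Tendsto hn atTop (𝓝 0) := by
    have hb : Tendsto (fun n : ℕ => τ / (n + 1)) atTop (𝓝 0) := by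
      have := tendsto_one_div_add_atTop_nhds_zero_nat.const_mul τ
      simpa [mul_one_div, div_eq_mul_inv] using this
    exact squeeze_zero (fun n => (hpos n).le) (fun n => (hnle n).2) hb
  -- bound on g over S
  set B : Set E := 𝓚 ∩ Metric.thickening α (closure U) with hBdef
  have hBK : B ⊆ 𝓚 := inter_subset_left
  have hBbdd : Bornology.IsBounded B :=
    (hUbdd.closure.cthickening (δ := α)).subset
      (inter_subset_right.trans (Metric.thickening_subset_cthickening _ _))
  obtain ⟨R, hR⟩ := isBounded_iff_forall_norm_le.1 (hGbdd B hBK hBbdd)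
  set Cg : ℝ := |R| + α with hCgdef
  have hCgpos : 0 < Cg := by positivity
  have hgb : ∀ x ∈ S, ‖g x‖ ≤ Cg := by
    intro x hxS'
    obtain ⟨x', hx'K, hx'n, y, hy, ξ, hξ, hgx⟩ := hgapprox x (hSK hxS')
    have hx'B : x' ∈ B :=
      ⟨hx'K, Metric.mem_thickening_iff.2 ⟨x, hxS'.1.1, by rwa [dist_eq_norm]⟩⟩
    have hyb : ‖y‖ ≤ R := hR y (mem_biUnion hx'B hy)
    calc ‖g x‖ = ‖y + ξ‖ := by rw [hgx]
      _ ≤ ‖y‖ + ‖ξ‖ := norm_add_le _ _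
      _ ≤ |R| + α := add_le_add (hyb.trans (le_abs_self R)) hξ.le
  -- the sequences w and z
  set w : ℕ → E := fun n => xs n + hn n • g (xs n) with hwdef
  set z : ℕ → E := fun n => J (hn n) (w n) with hzdef
  have hfix' : ∀ n, xs n = r (z n) := fun n => hfix n
  -- distance estimates
  have hzK2 : ∀ n, infDist (z n) 𝓚 ≤ 2 * M * infDist (w n) 𝓚 := by
    intro n
    refine le_of_forall_pos_le_add ?_
    intro ε hε
    have hM0 : (0:ℝ) < 2 * M := by linarith
    have : infDist (w n) 𝓚 < infDist (w n) 𝓚 + ε / (2 * M) :=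
      lt_add_of_pos_right _ (by positivity)
    obtain ⟨k, hk, hdk⟩ := (infDist_lt_iff hne).1 this
    obtain ⟨hhs, hhω⟩ := hh' _ (hpos n) (hleτ n)
    have h1 : J (hn n) k ∈ 𝓚 := hJinv _ (hpos n) hhs hhω k hk
    have h2 : infDist (z n) 𝓚 ≤ 2 * M * dist (w n) k := by
      calc infDist (z n) 𝓚 ≤ dist (z n) (J (hn n) k) := infDist_le_dist_of_mem h1
        _ = ‖J (hn n) (w n - k)‖ := by rw [dist_eq_norm, map_sub]
        _ ≤ 2 * M * ‖w n - k‖ := hJnorm2 _ (hpos n) (hleτ n) _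
        _ = 2 * M * dist (w n) k := by rw [dist_eq_norm]
    have h3 : 2 * M * dist (w n) k ≤ 2 * M * (infDist (w n) 𝓚 + ε / (2 * M)) :=
      mul_le_mul_of_nonneg_left hdk.le hM0.le
    have h4 : 2 * M * (infDist (w n) 𝓚 + ε / (2 * M)) = 2 * M * infDist (w n) 𝓚 + ε := by
      rw [mul_add, mul_div_cancel₀ _ hM0.ne']
    linarith
  have hzxnorm : ∀ n, ‖z n - xs n‖ ≤ 4 * M * infDist (w n) 𝓚 := by
    intro n
    have h1 := hrdist (z n)
    rw [← hfix' n] at h1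
    linarith [hzK2 n, Metric.infDist_nonneg (x := w n) (s := 𝓚)]
  have hwx : ∀ n, infDist (w n) 𝓚 ≤ hn n * Cg := by
    intro n
    calc infDist (w n) 𝓚 ≤ dist (w n) (xs n) := infDist_le_dist_of_mem (hnK n)
      _ = ‖hn n • g (xs n)‖ := by
          rw [dist_eq_norm]; congr 1; simp [hwdef]
      _ = hn n * ‖g (xs n)‖ := by
          rw [norm_smul, Real.norm_eq_abs, abs_of_pos (hpos n)]
      _ ≤ hn n * Cg := mul_le_mul_of_nonneg_left (hgb _ (hxS n)) (hpos n).le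
  -- A applied to z n
  have hzA : ∀ n, ∃ hd : z n ∈ A.domain, A ⟨z n, hd⟩ = (hn n)⁻¹ • (z n - w n) := by
    intro n
    obtain ⟨hhs, hhω⟩ := hh' _ (hpos n) (hleτ n)
    obtain ⟨hd, heq⟩ := hJ1 (hn n) (hpos n) hhs hhω (w n)
    refine ⟨hd, ?_⟩
    have h2 : hn n • A ⟨z n, hd⟩ = z n - w n := by
      have : z n - hn n • A ⟨z n, hd⟩ = w n := heq
      rw [← this]; abel
    rw [← h2, smul_smul, inv_mul_cancel₀ (hpos n).ne', one_smul]
  choose hdom hAz using hzA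
  -- uniform bound on A (z n) and z n
  obtain ⟨RS, hRS⟩ := isBounded_iff_forall_norm_le.1 hSbdd
  have hAbd : ∀ n, ‖A ⟨z n, hdom n⟩‖ ≤ 4 * M * Cg + Cg := by
    intro n
    rw [hAz n]
    have hzw : z n - w n = (z n - xs n) - hn n • g (xs n) := by
      simp only [hwdef]; abel
    have h1 : ‖z n - w n‖ ≤ hn n * (4 * M * Cg) + hn n * Cg := by
      rw [hzw]
      calc ‖(z n - xs n) - hn n • g (xs n)‖
          ≤ ‖z n - xs n‖ + ‖hn n • g (xs n)‖ := norm_sub_le _ _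
        _ ≤ 4 * M * (hn n * Cg) + hn n * ‖g (xs n)‖ := by
            rw [norm_smul, Real.norm_eq_abs, abs_of_pos (hpos n)]
            exact add_le_add ((hzxnorm n).trans
              (mul_le_mul_of_nonneg_left (hwx n) (by nlinarith))) le_rfl
        _ ≤ hn n * (4 * M * Cg) + hn n * Cg := by
            nlinarith [mul_le_mul_of_nonneg_left (hgb _ (hxS n)) (hpos n).le]
    rw [norm_smul, Real.norm_eq_abs, abs_of_pos (inv_pos.2 (hpos n))]
    rw [inv_mul_le_iff₀ (hpos n)]
    calc ‖z n - w n‖ ≤ hn n * (4 * M * Cg) + hn n * Cg := h1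
      _ = hn n * (4 * M * Cg + Cg) := by ring
  have hzbd : ∀ n, ‖z n‖ ≤ RS + 4 * M * Cg * τ := by
    intro n
    have h1 : ‖z n‖ ≤ ‖xs n‖ + ‖z n - xs n‖ := by
      have := norm_add_le (xs n) (z n - xs n)
      simpa using this
    have h2 := (hzxnorm n).trans (mul_le_mul_of_nonneg_left (hwx n) (by nlinarith))
    have h3 : 4 * M * (hn n * Cg) ≤ 4 * M * Cg * τ := by
      nlinarith [mul_nonneg (mul_nonneg (by linarith : (0:ℝ) ≤ 4 * M) hCgpos.le)
        (sub_nonneg.2 (hleτ n))]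
    have h4 := hRS _ (hxS n)
    linarith
  -- z n lies in a fixed compact set via the resolvent identity at τ
  set R₂ : ℝ := (RS + 4 * M * Cg * τ) + τ * (4 * M * Cg + Cg) with hR₂def
  have hτω : τ * ω < 1 := (key τ hτpos le_rfl).trans_lt (by norm_num)
  have hzz : ∀ n, z n = J τ (z n - τ • A ⟨z n, hdom n⟩) := fun n =>
    (hJ2 τ hτpos hτstar hτω ⟨z n, hdom n⟩).symm
  have hubd : ∀ n, z n - τ • A ⟨z n, hdom n⟩ ∈ Metric.closedBall (0:E) R₂ := by
    intro n
    rw [Metric.mem_closedBall, dist_zero_right]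
    calc ‖z n - τ • A ⟨z n, hdom n⟩‖ ≤ ‖z n‖ + ‖τ • A ⟨z n, hdom n⟩‖ := norm_sub_le _ _
      _ ≤ (RS + 4 * M * Cg * τ) + τ * (4 * M * Cg + Cg) := by
          rw [norm_smul, Real.norm_eq_abs, abs_of_pos hτpos]
          exact add_le_add (hzbd n) (mul_le_mul_of_nonneg_left (hAbd n) hτpos.le)
  obtain ⟨K, hKcomp, hKsub⟩ :=
    (hJcomp τ hτpos hτstar hτω).image_subset_compact_of_bounded (𝕜₁ := ℝ)
      (f := (J τ).toLinearMap) (Metric.isBounded_closedBall (x := (0:E)) (r := R₂))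
  have hzmem : ∀ n, z n ∈ K := by
    intro n
    rw [hzz n]
    exact hKsub ⟨_, hubd n, rfl⟩
  obtain ⟨zlim, hzlimK, φ, hφmono, hφtend⟩ := hKcomp.tendsto_subseq hzmem
  -- limits
  have hnφ0 : Tendsto (fun k => hn (φ k)) atTop (𝓝 0) := hn0.comp hφmono.tendsto_atTop
  have hzx0 : Tendsto (fun n => z n - xs n) atTop (𝓝 0) := by
    apply squeeze_zero_norm (fun n => (hzxnorm n).trans
      (mul_le_mul_of_nonneg_left (hwx n) (by nlinarith)))
    have : Tendsto (fun n => 4 * M * Cg * hn n) atTop (𝓝 (4 * M * Cg * 0)) :=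
      hn0.const_mul _
    simpa [mul_comm, mul_assoc, mul_left_comm] using this
  have hxφ : Tendsto (fun k => xs (φ k)) atTop (𝓝 zlim) := by
    have h1 : Tendsto (fun k => z (φ k) - (z (φ k) - xs (φ k))) atTop (𝓝 (zlim - 0)) :=
      hφtend.sub (hzx0.comp hφmono.tendsto_atTop)
    simpa using h1
  have hzlimS : zlim ∈ S :=
    hScl.mem_of_tendsto hxφ (Eventually.of_forall fun k => hxS (φ k))
  have hzlim𝓚 : zlim ∈ 𝓚 := hSK hzlimS
  have hgφ : Tendsto (fun k => g (xs (φ k))) atTop (𝓝 (g zlim)) := by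
    have h1 : Tendsto (fun k => xs (φ k)) atTop (𝓝[𝓚] zlim) :=
      tendsto_nhdsWithin_iff.2 ⟨hxφ, Eventually.of_forall fun k => hnK (φ k)⟩
    exact (hgcont zlim hzlim𝓚).tendsto.comp h1
  -- the small-oh estimate
  have hq0 : Tendsto (fun k => (hn (φ k))⁻¹ • (z (φ k) - xs (φ k))) atTop (𝓝 0) := by
    rw [NormedAddCommGroup.tendsto_nhds_zero]
    intro ε hε
    set δ : ℝ := ε / (24 * (M + 1)) with hδdef
    have hδpos : 0 < δ := by positivity
    have htan := hgtan zlim hzlim𝓚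
    rw [Metric.mem_closure_iff] at htan
    obtain ⟨p, hp, hpd⟩ := htan δ hδpos
    simp only [mem_iUnion, mem_image, Set.mem_Ioi] at hp
    obtain ⟨s, hs, k, hkK, hpk⟩ := hp
    have E1 : ∀ᶠ j in atTop, hn (φ j) < s := hnφ0.eventually (eventually_lt_nhds hs)
    have E2 : ∀ᶠ j in atTop, dist (xs (φ j)) zlim < s * δ :=
      hxφ.eventually (Metric.ball_mem_nhds zlim (by positivity))
    have E3 : ∀ᶠ j in atTop, dist (g (xs (φ j))) (g zlim) < δ :=
      hgφ.eventually (Metric.ball_mem_nhds _ hδpos)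
    filter_upwards [E1, E2, E3] with j h1 h2 h3
    set x := xs (φ j) with hxj
    set h := hn (φ j) with hhj
    have hhpos : 0 < h := hpos (φ j)
    have hhs' : h / s ≤ 1 := by
      rw [div_le_one hs]; exact h1.le
    have hqmem : (1 - h / s) • x + (h / s) • k ∈ 𝓚 :=
      hconv (hnK (φ j)) hkK (by linarith) (by positivity) (by ring)
    have hcalc : w (φ j) - ((1 - h / s) • x + (h / s) • k)
        = h • (g x - s⁻¹ • (k - x)) := by
      simp only [hwdef, smul_sub, sub_smul, one_smul, smul_smul, div_eq_mul_inv]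
      module
    have hterm : ‖g x - s⁻¹ • (k - x)‖ < 3 * δ := by
      have hsplit : g x - s⁻¹ • (k - x)
          = (g x - g zlim) + (g zlim - s⁻¹ • (k - zlim)) - s⁻¹ • (zlim - x) := by
        module
      have t1 : ‖g x - g zlim‖ < δ := by rwa [dist_eq_norm] at h3
      have t2 : ‖g zlim - s⁻¹ • (k - zlim)‖ < δ := by
        rw [← hpk] at hpd; rwa [dist_eq_norm] at hpd
      have t3 : ‖s⁻¹ • (zlim - x)‖ < δ := by
        rw [norm_smul, Real.norm_eq_abs, abs_of_pos (inv_pos.2 hs)]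
        rw [dist_eq_norm, ← norm_neg] at h2
        simp only [neg_sub] at h2
        calc s⁻¹ * ‖zlim - x‖ < s⁻¹ * (s * δ) :=
              mul_lt_mul_of_pos_left h2 (inv_pos.2 hs)
          _ = δ := by field_simp
      calc ‖g x - s⁻¹ • (k - x)‖
          ≤ ‖g x - g zlim‖ + ‖g zlim - s⁻¹ • (k - zlim)‖ + ‖s⁻¹ • (zlim - x)‖ := by
            rw [hsplit]
            exact (norm_sub_le _ _).trans (add_le_add (norm_add_le _ _) le_rfl)
        _ < 3 * δ := by linarith
    have hwS : infDist (w (φ j)) 𝓚 ≤ h * (3 * δ) := by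
      calc infDist (w (φ j)) 𝓚
          ≤ dist (w (φ j)) ((1 - h / s) • x + (h / s) • k) :=
            infDist_le_dist_of_mem hqmem
        _ = ‖h • (g x - s⁻¹ • (k - x))‖ := by rw [dist_eq_norm, hcalc]
        _ = h * ‖g x - s⁻¹ • (k - x)‖ := by
            rw [norm_smul, Real.norm_eq_abs, abs_of_pos hhpos]
        _ ≤ h * (3 * δ) := mul_le_mul_of_nonneg_left hterm.le hhpos.le
    have hfin : ‖(hn (φ j))⁻¹ • (z (φ j) - xs (φ j))‖ ≤ 12 * M * δ := by
      rw [norm_smul, Real.norm_eq_abs, abs_of_pos (inv_pos.2 hhpos),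
        inv_mul_le_iff₀ hhpos]
      calc ‖z (φ j) - xs (φ j)‖ ≤ 4 * M * infDist (w (φ j)) 𝓚 := hzxnorm (φ j)
        _ ≤ 4 * M * (h * (3 * δ)) := by nlinarith [hwS, hM]
        _ = h * (12 * M * δ) := by ring
    calc ‖(hn (φ j))⁻¹ • (z (φ j) - xs (φ j))‖ ≤ 12 * M * δ := hfin
      _ < ε := by
          have heq : 12 * M * δ = ε * (12 * M) / (24 * (M + 1)) := by
            rw [hδdef]; ring
          rw [heq, div_lt_iff₀ (by positivity)]
          nlinarith
  -- pass to the limit in the operator A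
  have hAtend : Tendsto (fun k => A ⟨z (φ k), hdom (φ k)⟩) atTop (𝓝 (-g zlim)) := by
    have heq : ∀ k, A ⟨z (φ k), hdom (φ k)⟩
        = (hn (φ k))⁻¹ • (z (φ k) - xs (φ k)) - g (xs (φ k)) := by
      intro k
      rw [hAz (φ k)]
      have hzw : z (φ k) - w (φ k) = (z (φ k) - xs (φ k)) - hn (φ k) • g (xs (φ k)) := by
        simp only [hwdef]; abel
      rw [hzw, smul_sub, smul_smul, inv_mul_cancel₀ (hpos (φ k)).ne', one_smul]
    have h1 : Tendsto (fun k => (hn (φ k))⁻¹ • (z (φ k) - xs (φ k)) - g (xs (φ k)))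
        atTop (𝓝 (0 - g zlim)) := hq0.sub hgφ
    rw [zero_sub] at h1
    exact h1.congr fun k => (heq k).symm
  have hgraph : (zlim, -g zlim) ∈ (A.graph : Set (E × E)) := by
    have hmem : ∀ k, (z (φ k), A ⟨z (φ k), hdom (φ k)⟩) ∈ (A.graph : Set (E × E)) :=
      fun k => A.mem_graph ⟨z (φ k), hdom (φ k)⟩
    have htend : Tendsto (fun k => (z (φ k), A ⟨z (φ k), hdom (φ k)⟩)) atTop
        (𝓝 (zlim, -g zlim)) := hφtend.prodMk_nhds hAtend
    exact hAclosed.mem_of_tendsto htend (Eventually.of_forall hmem)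
  obtain ⟨y₀, hy₀1, hy₀2⟩ := A.mem_graph_iff.1 hgraph
  have hy₀1' : (y₀ : E) = zlim := hy₀1
  have hy₀2' : A y₀ = -g zlim := hy₀2
  have hzlimdom : zlim ∈ A.domain := by rw [← hy₀1']; exact y₀.2
  have hAeq : A ⟨zlim, hzlimdom⟩ = -g zlim := by
    have heq : (⟨zlim, hzlimdom⟩ : A.domain) = y₀ := Subtype.ext hy₀1'.symm
    rw [heq]; exact hy₀2'
  obtain ⟨x', hx'K, hx'n, y, hy, ξ, hξ, hgz⟩ := hgapprox zlim hzlim𝓚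
  refine hne0 zlim hzlimdom hzlimS x' hx'K hx'n y hy ξ hξ ?_
  rw [hAeq, hgz]
  abel
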